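/- The function I_B(P) = (P/Δ)·log₂(P/Δ) − (p + P/Δ)·log₂(p + P/Δ) − (1−p)·log₂(1−p), defined for 0 ≤ P ≤ Δ(1−p) with p ∈ (0,1) and Δ > 0, is monotonically (strictly) decreasing in P on [0, Δ(1−p)], and satisfies I_B(Δ(1−p)) = 0 and I_B(0) = H_B(p), where H_B(p) = −p·log₂ p − (1−p)·log₂(1−p). -/

import Mathlib

open Real

/-- `x log₂ x` with the convention `0 · log 0 = 0`. -/
noncomputable def xlog2 (x : ℝ) : ℝ := if x = 0 then 0 else x * Real.logb 2 x

/-- The binary privacy-power leakage function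
`I_B(P) = (P/Δ)log₂(P/Δ) − (p + P/Δ)log₂(p + P/Δ) − (1−p)log₂(1−p)`,
with the convention `0 · log 0 = 0`. -/
noncomputable def IB (p Δ P : ℝ) : ℝ :=
  xlog2 (P / Δ) - xlog2 (p + P / Δ) - xlog2 (1 - p)

/-- Binary entropy function (in bits). -/
noncomputable def binEnt (p : ℝ) : ℝ := -p * Real.logb 2 p - (1 - p) * Real.logb 2 (1 - p)

lemma xlog2_eq (x : ℝ) : xlog2 x = x * Real.log x / Real.log 2 := by
  unfold xlog2
  split_ifs with h
  · simp [h]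
  · rw [Real.logb]; ring

/-- For p ∈ (0,1) and Δ > 0, the function I_B(P) is strictly decreasing in P
on [0, Δ(1−p)], satisfies I_B(Δ(1−p)) = 0 and I_B(0) = H_B(p). -/
theorem IB_strictAnti_and_endpoints
    (p Δ : ℝ) (hp : 0 < p) (hp1 : p < 1) (hΔ : 0 < Δ) :
    StrictAntiOn (IB p Δ) (Set.Icc 0 (Δ * (1 - p)))
      ∧ IB p Δ (Δ * (1 - p)) = 0
      ∧ IB p Δ 0 = binEnt p := by
  have hΔ' : Δ ≠ 0 := ne_of_gt hΔ
  set G : ℝ → ℝ := fun P =>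
    (P / Δ) * Real.log (P / Δ) - (p + P / Δ) * Real.log (p + P / Δ) with hG
  have hIB : ∀ P, IB p Δ P = G P / Real.log 2 - xlog2 (1 - p) := by
    intro P
    simp only [IB, hG, xlog2_eq, sub_div]
  -- continuity of G
  have hcont : ContinuousOn G (Set.Icc 0 (Δ * (1 - p))) := by
    apply Continuous.continuousOn
    exact ((Real.continuous_mul_log.comp (continuous_id.div_const Δ)).sub
      (Real.continuous_mul_log.comp ((continuous_const.add (continuous_id.div_const Δ)))))
  -- derivative negative on interior
  have hderiv : ∀ P ∈ interior (Set.Icc (0:ℝ) (Δ * (1 - p))), deriv G P < 0 := by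
    intro P hP
    rw [interior_Icc] at hP
    have hP0 : 0 < P := hP.1
    have hx : 0 < P / Δ := div_pos hP0 hΔ
    have hy : 0 < p + P / Δ := by positivity
    have h1 : HasDerivAt (fun P : ℝ => P / Δ) (1 / Δ) P := (hasDerivAt_id P).div_const Δ
    have h2 : HasDerivAt (fun P : ℝ => (P / Δ) * Real.log (P / Δ))
        ((Real.log (P / Δ) + 1) * (1 / Δ)) P :=
      by have h := (Real.hasDerivAt_mul_log (ne_of_gt hx)).comp P h1; exact h
    have h3 : HasDerivAt (fun P : ℝ => p + P / Δ) (1 / Δ) P := by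
      simpa using (h1.const_add p)
    have h4 : HasDerivAt (fun P : ℝ => (p + P / Δ) * Real.log (p + P / Δ))
        ((Real.log (p + P / Δ) + 1) * (1 / Δ)) P :=
      by have h := (Real.hasDerivAt_mul_log (ne_of_gt hy)).comp P h3; exact h
    have h5 : HasDerivAt G
        ((Real.log (P / Δ) + 1) * (1 / Δ) - (Real.log (p + P / Δ) + 1) * (1 / Δ)) P :=
      h2.sub h4
    rw [h5.deriv]
    have hlt : Real.log (P / Δ) < Real.log (p + P / Δ) :=
      Real.log_lt_log hx (by linarith)
    have : (0:ℝ) < 1 / Δ := by positivity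
    nlinarith
  have hGanti : StrictAntiOn G (Set.Icc 0 (Δ * (1 - p))) :=
    strictAntiOn_of_deriv_neg (convex_Icc _ _) hcont hderiv
  have hlog2 : (0:ℝ) < Real.log 2 := Real.log_pos (by norm_num)
  refine ⟨?_, ?_, ?_⟩
  · intro a ha b hb hab
    rw [hIB a, hIB b]
    have h := hGanti ha hb hab
    have h2 : G b / Real.log 2 < G a / Real.log 2 := by gcongr
    linarith
  · have h1 : Δ * (1 - p) / Δ = 1 - p := by field_simp
    simp [IB, h1, xlog2]
  · have hp' : p ≠ 0 := ne_of_gt hp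
    have h1p : (1:ℝ) - p ≠ 0 := by linarith
    simp [IB, xlog2, hp', h1p, binEnt]
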